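/- Let Ω ⊆ ℝ² be an open bounded set and f : Ω → ℝ measurable. Suppose there exist constants C > 0, δ ∈ (0,1), and m ≥ 0 (an integer) such that for all λ ≥ 2, |∫_Ω e^{iλ f(x)} dx| ≤ C λ^{-δ} (log λ)^m. Then there is a constant C_δ > 0 such that for all sufficiently small ε ∈ (0,1), the Lebesgue measure of {x ∈ Ω : |f(x)| ≤ ε} is at most C_δ ε^δ |log ε|^m. -/

import Mathlib

open MeasureTheory Real Set intervalIntegral


noncomputable def Gker (u : ℝ) : ℝ := if u = 0 then 1 else 2 * (1 - Real.cos u) / u ^ 2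

lemma Gker_meas : Measurable Gker := by
  unfold Gker
  exact Measurable.ite (measurableSet_eq_fun measurable_id measurable_const)
    measurable_const (by fun_prop)

lemma Gker_nonneg (u : ℝ) : 0 ≤ Gker u := by
  unfold Gker
  split
  · norm_num
  · have h1 : Real.cos u ≤ 1 := Real.cos_le_one u
    have h2 : (0:ℝ) ≤ u ^ 2 := sq_nonneg u
    apply div_nonneg _ h2
    linarith

lemma one_sub_cos_eq (u : ℝ) : 1 - Real.cos u = 2 * Real.sin (u/2) ^ 2 := by
  have h := Real.cos_two_mul (u/2)
  have h2 : 2 * (u/2) = u := by ring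
  rw [h2] at h
  nlinarith [Real.sin_sq_add_cos_sq (u/2)]

lemma Gker_le_one (u : ℝ) : Gker u ≤ 1 := by
  unfold Gker
  split
  · norm_num
  · rename_i h
    have h2 : (0:ℝ) < u ^ 2 := by positivity
    rw [div_le_one h2]
    have h3 := one_sub_cos_eq u
    have hs : Real.sin (u/2) ^ 2 ≤ (u/2) ^ 2 := Real.sin_sq_le_sq
    nlinarith

lemma Gker_half {u : ℝ} (hu : |u| ≤ 1) : 1/2 ≤ Gker u := by
  unfold Gker
  split
  · norm_num
  · rename_i h
    have h2 : (0:ℝ) < u ^ 2 := by positivity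
    rw [le_div_iff₀ h2]
    rw [one_sub_cos_eq u]
    -- need sin(u/2)^2 ≥ (u/2)^2 / 2
    have habs : Real.sin (u/2) ^ 2 = Real.sin (|u|/2) ^ 2 := by
      rcases abs_cases u with ⟨h1, _⟩ | ⟨h1, _⟩
      · rw [h1]
      · rw [h1]; rw [show -u/2 = -(u/2) by ring, Real.sin_neg]; ring
    have hpos : 0 < |u|/2 := by
      have : u ≠ 0 := h
      have : 0 < |u| := abs_pos.mpr this
      linarith
    have hle : |u|/2 ≤ 1 := by linarith
    have hsin : |u|/2 - (|u|/2)^3/4 < Real.sin (|u|/2) := by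
      have := Real.sin_gt_sub_cube hpos; nlinarith [pow_pos hpos 3]
    set t := |u|/2 with ht
    have htle : t ≤ 1/2 := by rw [ht]; linarith
    have h15 : (15:ℝ)/16 * t ≤ t - t^3/4 := by nlinarith [mul_pos hpos hpos, sq_nonneg (t - 1/2), mul_nonneg (mul_nonneg hpos.le hpos.le) hpos.le]
    have hsin2 : (15:ℝ)/16 * t ≤ Real.sin t := by linarith
    have hsq : ((15:ℝ)/16 * t)^2 ≤ Real.sin t ^ 2 := by
      have h0 : 0 ≤ (15:ℝ)/16 * t := by positivity
      nlinarith
    have hu2 : u^2 = (2*t)^2 := by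
      rw [ht]; rcases abs_cases u with ⟨h1,_⟩|⟨h1,_⟩ <;> rw [h1] <;> ring
    rw [habs]
    nlinarith [hsq, hu2, sq_nonneg t, mul_pos hpos hpos]



lemma contker (u : ℝ) : Continuous (fun s : ℝ => (1 - |s|) * Real.cos (u * s)) := by
  fun_prop

lemma piece_pos (u : ℝ) (hu : u ≠ 0) :
    ∫ s in (0:ℝ)..1, (1 - s) * Real.cos (u * s) = (1 - Real.cos u) / u ^ 2 := by
  have hderiv : ∀ s ∈ Set.uIcc (0:ℝ) 1,
      HasDerivAt (fun s => (1 - s) * Real.sin (u * s) / u - Real.cos (u * s) / u ^ 2)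
        ((1 - s) * Real.cos (u * s)) s := by
    intro s _
    have hlin : HasDerivAt (fun s : ℝ => u * s) u s := by
      simpa using (hasDerivAt_id s).const_mul u
    have hsin : HasDerivAt (fun s : ℝ => Real.sin (u * s)) (Real.cos (u * s) * u) s :=
      (Real.hasDerivAt_sin (u * s)).comp s hlin
    have hcos : HasDerivAt (fun s : ℝ => Real.cos (u * s)) (-Real.sin (u * s) * u) s :=
      (Real.hasDerivAt_cos (u * s)).comp s hlin
    have h2 : HasDerivAt (fun s : ℝ => 1 - s) (-1) s := by
      simpa using (hasDerivAt_id s).const_sub 1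
    have := ((h2.mul hsin).div_const u).sub (hcos.div_const (u ^ 2))
    refine this.congr_deriv ?_
    field_simp
    ring
  rw [intervalIntegral.integral_eq_sub_of_hasDerivAt hderiv
    (Continuous.intervalIntegrable (by fun_prop) _ _)]
  simp [Real.sin_zero, Real.cos_zero]
  field_simp
  ring

lemma piece_neg (u : ℝ) (hu : u ≠ 0) :
    ∫ s in (-1:ℝ)..0, (1 + s) * Real.cos (u * s) = (1 - Real.cos u) / u ^ 2 := by
  have hderiv : ∀ s ∈ Set.uIcc (-1:ℝ) 0,
      HasDerivAt (fun s => (1 + s) * Real.sin (u * s) / u + Real.cos (u * s) / u ^ 2)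
        ((1 + s) * Real.cos (u * s)) s := by
    intro s _
    have hlin : HasDerivAt (fun s : ℝ => u * s) u s := by
      simpa using (hasDerivAt_id s).const_mul u
    have hsin : HasDerivAt (fun s : ℝ => Real.sin (u * s)) (Real.cos (u * s) * u) s :=
      (Real.hasDerivAt_sin (u * s)).comp s hlin
    have hcos : HasDerivAt (fun s : ℝ => Real.cos (u * s)) (-Real.sin (u * s) * u) s :=
      (Real.hasDerivAt_cos (u * s)).comp s hlin
    have h2 : HasDerivAt (fun s : ℝ => 1 + s) (1) s := by
      simpa using (hasDerivAt_id s).const_add 1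
    have := ((h2.mul hsin).div_const u).add (hcos.div_const (u ^ 2))
    refine this.congr_deriv ?_
    field_simp
    ring
  rw [intervalIntegral.integral_eq_sub_of_hasDerivAt hderiv
    (Continuous.intervalIntegrable (by fun_prop) _ _)]
  simp [Real.sin_zero, Real.cos_zero, Real.sin_neg, Real.cos_neg]
  field_simp

lemma kernel_integral (u : ℝ) :
    ∫ s in (-1:ℝ)..1, (1 - |s|) * Real.cos (u * s) = Gker u := by
  have h1 : IntervalIntegrable (fun s : ℝ => (1 - |s|) * Real.cos (u * s)) volume (-1) 0 :=
    (contker u).intervalIntegrable _ _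
  have h2 : IntervalIntegrable (fun s : ℝ => (1 - |s|) * Real.cos (u * s)) volume 0 1 :=
    (contker u).intervalIntegrable _ _
  rw [← intervalIntegral.integral_add_adjacent_intervals h1 h2]
  have e1 : ∫ s in (-1:ℝ)..0, (1 - |s|) * Real.cos (u * s)
      = ∫ s in (-1:ℝ)..0, (1 + s) * Real.cos (u * s) := by
    apply intervalIntegral.integral_congr
    intro s hs
    rw [Set.uIcc_of_le (by norm_num : (-1:ℝ) ≤ 0)] at hs
    show (1 - |s|) * Real.cos (u * s) = (1 + s) * Real.cos (u * s)
    rw [abs_of_nonpos hs.2]; ring_nf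
  have e2 : ∫ s in (0:ℝ)..1, (1 - |s|) * Real.cos (u * s)
      = ∫ s in (0:ℝ)..1, (1 - s) * Real.cos (u * s) := by
    apply intervalIntegral.integral_congr
    intro s hs
    rw [Set.uIcc_of_le (by norm_num : (0:ℝ) ≤ 1)] at hs
    show (1 - |s|) * Real.cos (u * s) = (1 - s) * Real.cos (u * s)
    rw [abs_of_nonneg hs.1]
  rw [e1, e2]
  by_cases hu : u = 0
  · subst hu
    simp only [zero_mul, Real.cos_zero, mul_one]
    rw [Gker, if_pos rfl]
    have ia : ∫ s in (-1:ℝ)..0, (1 + s) = 1/2 := by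
      rw [intervalIntegral.integral_add (intervalIntegrable_const)
        (intervalIntegral.intervalIntegrable_id)]
      simp [integral_id, intervalIntegral.integral_const]
      norm_num
    have ib : ∫ s in (0:ℝ)..1, (1 - s) = 1/2 := by
      rw [intervalIntegral.integral_sub (intervalIntegrable_const)
        (intervalIntegral.intervalIntegrable_id)]
      simp [integral_id, intervalIntegral.integral_const]
      norm_num
    rw [ia, ib]
    norm_num
  · rw [piece_pos u hu, piece_neg u hu, Gker, if_neg hu]
    ring


variable {δ : ℝ}

lemma absrpow_ii01 (hδ1 : δ < 1) :
    IntervalIntegrable (fun s : ℝ => |s| ^ (-δ)) volume 0 1 := by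
  have := intervalIntegrable_rpow' (a := (0:ℝ)) (b := 1) (r := -δ) (by linarith)
  refine this.congr ?_
  intro s hs
  rw [Set.uIoc_of_le (by norm_num : (0:ℝ) ≤ 1)] at hs
  show s ^ (-δ) = |s| ^ (-δ); rw [abs_of_nonneg hs.1.le]

lemma absrpow_iineg (hδ1 : δ < 1) :
    IntervalIntegrable (fun s : ℝ => |s| ^ (-δ)) volume (-1) 0 := by
  have := (IntervalIntegrable.iff_comp_neg (by simp)).mp (absrpow_ii01 hδ1)
  simpa using this.symm

lemma absrpow_ii (hδ1 : δ < 1) :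
    IntervalIntegrable (fun s : ℝ => |s| ^ (-δ)) volume (-1) 1 :=
  (absrpow_iineg hδ1).trans (absrpow_ii01 hδ1)

lemma absrpow_int (hδ0 : 0 < δ) (hδ1 : δ < 1) :
    ∫ s in (-1:ℝ)..1, |s| ^ (-δ) = 2 / (1 - δ) := by
  have h01 : ∫ s in (0:ℝ)..1, |s| ^ (-δ) = 1 / (1 - δ) := by
    have he : ∫ s in (0:ℝ)..1, |s| ^ (-δ) = ∫ s in (0:ℝ)..1, s ^ (-δ) := by
      apply intervalIntegral.integral_congr
      intro s hs
      rw [Set.uIcc_of_le (by norm_num : (0:ℝ) ≤ 1)] at hs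
      show |s| ^ (-δ) = s ^ (-δ)
      rw [abs_of_nonneg hs.1]
    rw [he, integral_rpow (Or.inl (by linarith))]
    rw [Real.zero_rpow (by linarith), Real.one_rpow]
    ring
  have hneg : ∫ s in (-1:ℝ)..0, |s| ^ (-δ) = 1 / (1 - δ) := by
    have : ∫ s in (-1:ℝ)..0, |(-s)| ^ (-δ) = ∫ s in (0:ℝ)..1, |s| ^ (-δ) := by
      rw [intervalIntegral.integral_comp_neg (f := fun s => |s| ^ (-δ))]
      norm_num
    simp only [abs_neg] at this
    rw [this, h01]
  rw [← intervalIntegral.integral_add_adjacent_intervals (absrpow_iineg hδ1) (absrpow_ii01 hδ1),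
    hneg, h01]
  ring

set_option maxHeartbeats 2000000 in
theorem stmt_0 (Ω : Set (ℝ × ℝ)) (hΩo : IsOpen Ω) (hΩb : Bornology.IsBounded Ω)
    (f : ℝ × ℝ → ℝ) (hf : Measurable f)
    (C δ : ℝ) (m : ℕ) (hC : 0 < C) (hδ0 : 0 < δ) (hδ1 : δ < 1)
    (hosc : ∀ L : ℝ, 2 ≤ L →
      ‖∫ x in Ω, Complex.exp (Complex.I * L * f x)‖ ≤ C * L ^ (-δ) * (Real.log L) ^ m) :
    ∃ Cδ > 0, ∃ ε₀ ∈ Ioo (0:ℝ) 1, ∀ ε ∈ Ioo (0:ℝ) ε₀,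
      (volume {x ∈ Ω | |f x| ≤ ε}).toReal ≤ Cδ * ε ^ δ * |Real.log ε| ^ m := by
  have hΩm : MeasurableSet Ω := hΩo.measurableSet
  have hVlt : volume Ω < ⊤ := hΩb.measure_lt_top
  set V : ℝ := (volume Ω).toReal with hV
  have hV0 : 0 ≤ V := ENNReal.toReal_nonneg
  have h1δ : (0:ℝ) < 1 - δ := by linarith
  haveI hfinΩ : IsFiniteMeasure (volume.restrict Ω) :=
    ⟨by rwa [Measure.restrict_apply_univ]⟩
  haveI hfinI : IsFiniteMeasure (volume.restrict (Ioc (-1:ℝ) 1)) :=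
    ⟨by rw [Measure.restrict_apply_univ]; exact measure_Ioc_lt_top⟩
  refine ⟨8*V + 4*C/(1-δ) + 1, by positivity, Real.exp (-1),
    ⟨Real.exp_pos _, by rw [Real.exp_lt_one_iff]; norm_num⟩, ?_⟩
  intro ε ⟨hεpos, hεe⟩
  have hε1 : ε < 1 := hεe.trans (by rw [Real.exp_lt_one_iff]; norm_num)
  have hlogneg : Real.log ε < -1 := by
    have := Real.log_lt_log hεpos hεe
    rwa [Real.log_exp] at this
  have habslog : |Real.log ε| = -Real.log ε := abs_of_neg (by linarith)
  have hlog1 : 1 ≤ |Real.log ε| := by rw [habslog]; linarith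
  have hεδ0 : 0 < ε ^ δ := Real.rpow_pos_of_pos hεpos δ
  -- the sublevel set
  set S : Set (ℝ × ℝ) := {x ∈ Ω | |f x| ≤ ε} with hS
  have hSsub : S ⊆ Ω := fun x hx => hx.1
  have hSm : MeasurableSet S := by
    have : S = Ω ∩ {x | |f x| ≤ ε} := rfl
    rw [this]
    exact hΩm.inter (measurableSet_le (by fun_prop) measurable_const)
  have hSlt : volume S < ⊤ := (measure_mono hSsub).trans_lt hVlt
  -- integrability of Gker composed
  have hGint : IntegrableOn (fun x => Gker (f x / ε)) Ω volume := by
    refine Integrable.mono' (integrable_const 1)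
      ((Gker_meas.comp (hf.div_const ε)).aestronglyMeasurable) ?_
    filter_upwards with x
    rw [Real.norm_eq_abs, abs_of_nonneg (Gker_nonneg _)]
    exact Gker_le_one _
  -- Step B : sublevel measure ≤ 2 ∫ Gker
  have stepB : (volume S).toReal ≤ 2 * ∫ x in Ω, Gker (f x / ε) := by
    have h0 : (volume S).toReal = ∫ x in S, (1:ℝ) := by
      rw [setIntegral_const]; simp [Measure.real]
    have h1 : ∫ x in S, (1:ℝ) ≤ ∫ x in S, 2 * Gker (f x / ε) := by
      refine setIntegral_mono_on (integrableOn_const hSlt.ne)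
        ((hGint.mono_set hSsub).const_mul 2) hSm ?_
      intro x hx
      have hfx : |f x / ε| ≤ 1 := by
        rw [abs_div, abs_of_pos hεpos, div_le_one hεpos]
        exact hx.2
      have := Gker_half hfx
      linarith
    have h2 : ∫ x in S, 2 * Gker (f x / ε) ≤ ∫ x in Ω, 2 * Gker (f x / ε) := by
      refine setIntegral_mono_set (hGint.const_mul 2) ?_ (HasSubset.Subset.eventuallyLE hSsub)
      exact ae_of_all _ fun x => by
        simp only [Pi.zero_apply]
        have := Gker_nonneg (f x / ε); linarith
    calc (volume S).toReal = ∫ x in S, (1:ℝ) := h0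
      _ ≤ ∫ x in S, 2 * Gker (f x / ε) := h1
      _ ≤ ∫ x in Ω, 2 * Gker (f x / ε) := h2
      _ = 2 * ∫ x in Ω, Gker (f x / ε) := MeasureTheory.integral_const_mul 2 _
  -- integrability of complex exponential and cosine integrands
  have hexpInt : ∀ L : ℝ, IntegrableOn (fun x => Complex.exp (Complex.I * L * f x)) Ω volume := by
    intro L
    refine Integrable.mono' (integrable_const 1) ?_ ?_
    · apply Measurable.aestronglyMeasurable
      fun_prop
    · filter_upwards with x
      rw [Complex.norm_exp]
      simp [Complex.mul_re]
  have hcosInt : ∀ L : ℝ, IntegrableOn (fun x => Real.cos (L * f x)) Ω volume := by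
    intro L
    refine Integrable.mono' (integrable_const 1) ?_ ?_
    · apply Measurable.aestronglyMeasurable; fun_prop
    · filter_upwards with x
      rw [Real.norm_eq_abs]
      exact Real.abs_cos_le_one _
  -- real part identity
  have hRe : ∀ L : ℝ, (∫ x in Ω, Real.cos (L * f x))
      = (∫ x in Ω, Complex.exp (Complex.I * L * f x)).re := by
    intro L
    have h1 : ∀ x : ℝ × ℝ, Real.cos (L * f x) = (Complex.exp (Complex.I * L * f x)).re := by
      intro x
      have h2 : Complex.I * L * (f x : ℂ) = ((L * f x : ℝ) : ℂ) * Complex.I := by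
        push_cast; ring
      rw [h2, Complex.exp_ofReal_mul_I_re]
    calc ∫ x in Ω, Real.cos (L * f x)
        = ∫ x in Ω, (Complex.exp (Complex.I * L * f x)).re :=
          integral_congr_ae (Filter.Eventually.of_forall h1)
      _ = (∫ x in Ω, Complex.exp (Complex.I * L * f x)).re := by
          rw [← RCLike.re_to_complex]
          rw [← integral_re (hexpInt L)]
          simp
  -- oscillation bound on cosine integrals
  have hbound : ∀ L : ℝ, 2 ≤ L →
      |∫ x in Ω, Real.cos (L * f x)| ≤ C * L ^ (-δ) * Real.log L ^ m := by
    intro L hL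
    rw [hRe]
    refine (Complex.abs_re_le_norm _).trans ?_
    exact hosc L hL
  -- trivial bound
  have htriv : ∀ L : ℝ, |∫ x in Ω, Real.cos (L * f x)| ≤ V := by
    intro L
    have h := norm_integral_le_of_norm_le_const (μ := volume.restrict Ω)
      (f := fun x => Real.cos (L * f x)) (C := 1)
      (Filter.Eventually.of_forall fun x => by
        rw [Real.norm_eq_abs]; exact Real.abs_cos_le_one _)
    rw [Real.norm_eq_abs] at h
    refine h.trans ?_
    rw [measureReal_restrict_apply_univ]
    simp [hV, Measure.real]
  -- Fubini
  have hFint : Integrable (Function.uncurry fun (x : ℝ × ℝ) (s : ℝ) =>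
      (1 - |s|) * Real.cos ((f x / ε) * s))
      ((volume.restrict Ω).prod (volume.restrict (Ioc (-1:ℝ) 1))) := by
    refine Integrable.mono' (integrable_const 1) ?_ ?_
    · apply Measurable.aestronglyMeasurable
      apply Measurable.mul
      · fun_prop
      · exact Real.measurable_cos.comp
          (((hf.comp measurable_fst).div_const ε).mul measurable_snd)
    · rw [Measure.prod_restrict]
      filter_upwards [ae_restrict_mem (hΩm.prod measurableSet_Ioc)] with p hp
      obtain ⟨x, s⟩ := p
      obtain ⟨-, hs⟩ := hp
      have hs1 : |s| ≤ 1 := abs_le.2 ⟨hs.1.le, hs.2⟩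
      have h2 : abs (1 - |s|) ≤ 1 := by
        rw [abs_of_nonneg (by linarith [abs_nonneg s])]
        linarith [abs_nonneg s]
      show ‖(1 - |s|) * Real.cos ((f x / ε) * s)‖ ≤ 1
      rw [Real.norm_eq_abs, abs_mul]
      calc abs (1 - |s|) * |Real.cos ((f x / ε) * s)|
          ≤ 1 * 1 := mul_le_mul h2 (Real.abs_cos_le_one _) (abs_nonneg _) zero_le_one
        _ = 1 := one_mul 1
  have hFub : ∫ x in Ω, Gker (f x / ε)
      = ∫ s in Ioc (-1:ℝ) 1, ((1 - |s|) * ∫ x in Ω, Real.cos ((f x / ε) * s)) := by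
    have h1 : ∀ x : ℝ × ℝ, Gker (f x / ε)
        = ∫ s in Ioc (-1:ℝ) 1, (1 - |s|) * Real.cos ((f x / ε) * s) := by
      intro x
      rw [← kernel_integral (f x / ε), intervalIntegral.integral_of_le (by norm_num : (-1:ℝ) ≤ 1)]
    calc ∫ x in Ω, Gker (f x / ε)
        = ∫ x in Ω, ∫ s in Ioc (-1:ℝ) 1, (1 - |s|) * Real.cos ((f x / ε) * s) :=
          integral_congr_ae (Filter.Eventually.of_forall h1)
      _ = ∫ s in Ioc (-1:ℝ) 1, ∫ x in Ω, (1 - |s|) * Real.cos ((f x / ε) * s) :=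
          integral_integral_swap hFint
      _ = ∫ s in Ioc (-1:ℝ) 1, ((1 - |s|) * ∫ x in Ω, Real.cos ((f x / ε) * s)) := by
          congr 1
          ext s
          exact MeasureTheory.integral_const_mul _ _
  -- trivial bound for the inner integrals
  have htriv' : ∀ s : ℝ, |∫ x in Ω, Real.cos ((f x / ε) * s)| ≤ V := by
    intro s
    have h := norm_integral_le_of_norm_le_const (μ := volume.restrict Ω)
      (f := fun x => Real.cos ((f x / ε) * s)) (C := 1)
      (Filter.Eventually.of_forall fun x => by
        rw [Real.norm_eq_abs]; exact Real.abs_cos_le_one _)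
    rw [Real.norm_eq_abs] at h
    refine h.trans ?_
    rw [measureReal_restrict_apply_univ]
    simp [hV, Measure.real]
  -- oscillatory bound for large |s|
  set c2 : ℝ := C * ε ^ δ * |Real.log ε| ^ m with hc2
  have hc2pos : 0 < c2 := by positivity
  have hOsc' : ∀ s : ℝ, s ∈ Ioc (-1:ℝ) 1 → 2*ε ≤ |s| →
      |∫ x in Ω, Real.cos ((f x / ε) * s)| ≤ c2 * |s| ^ (-δ) := by
    intro s hs h2e
    have hspos : 0 < |s| := lt_of_lt_of_le (by positivity) h2e
    have heq : ∀ x : ℝ × ℝ, Real.cos ((f x / ε) * s) = Real.cos ((|s|/ε) * f x) := by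
      intro x
      rcases abs_cases s with ⟨h1, _⟩ | ⟨h1, _⟩
      · rw [h1]; ring_nf
      · rw [h1, show (f x / ε) * s = -((-s/ε) * f x) by ring, Real.cos_neg]
    have hint : ∫ x in Ω, Real.cos ((f x / ε) * s) = ∫ x in Ω, Real.cos ((|s|/ε) * f x) :=
      integral_congr_ae (Filter.Eventually.of_forall heq)
    have hL2 : 2 ≤ |s| / ε := (le_div_iff₀ hεpos).2 (by linarith)
    have hb := hbound (|s|/ε) hL2
    rw [hint]
    refine hb.trans ?_
    have hrw : (|s|/ε) ^ (-δ) = |s| ^ (-δ) * ε ^ δ := by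
      rw [Real.div_rpow (abs_nonneg s) hεpos.le, Real.rpow_neg hεpos.le δ, div_inv_eq_mul]
    have habs1 : |s| ≤ 1 := abs_le.2 ⟨hs.1.le, hs.2⟩
    have hlogL : Real.log (|s|/ε) ≤ |Real.log ε| := by
      rw [Real.log_div (ne_of_gt hspos) (ne_of_gt hεpos), habslog]
      have : Real.log |s| ≤ 0 := Real.log_nonpos (abs_nonneg s) habs1
      linarith
    have hlogL0 : 0 ≤ Real.log (|s|/ε) := Real.log_nonneg (by linarith)
    have hpow : Real.log (|s|/ε) ^ m ≤ |Real.log ε| ^ m := pow_le_pow_left₀ hlogL0 hlogL m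
    have hrp0 : (0:ℝ) ≤ |s| ^ (-δ) := Real.rpow_nonneg (abs_nonneg s) _
    calc C * (|s|/ε) ^ (-δ) * Real.log (|s|/ε) ^ m
        = C * (|s| ^ (-δ) * ε ^ δ) * Real.log (|s|/ε) ^ m := by rw [hrw]
      _ ≤ C * (|s| ^ (-δ) * ε ^ δ) * |Real.log ε| ^ m := by
          apply mul_le_mul_of_nonneg_left hpow
          positivity
      _ = c2 * |s| ^ (-δ) := by rw [hc2]; ring
  -- the comparison function ψ
  set ψ : ℝ → ℝ := fun s =>
    V * Set.indicator (Icc (-(2*ε)) (2*ε)) (fun _ => (1:ℝ)) s + c2 * |s| ^ (-δ) with hψ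
  have hψ1int : Integrable (fun s : ℝ =>
      V * Set.indicator (Icc (-(2*ε)) (2*ε)) (fun _ => (1:ℝ)) s)
      (volume.restrict (Ioc (-1:ℝ) 1)) := by
    apply Integrable.const_mul
    apply Integrable.integrableOn
    rw [integrable_indicator_iff measurableSet_Icc]
    exact integrableOn_const measure_Icc_lt_top.ne
  have hψ2int : Integrable (fun s : ℝ => c2 * |s| ^ (-δ))
      (volume.restrict (Ioc (-1:ℝ) 1)) :=
    ((absrpow_ii hδ1).1).const_mul c2
  have hψint : Integrable ψ (volume.restrict (Ioc (-1:ℝ) 1)) := hψ1int.add hψ2int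
  -- a.e. pointwise bound
  have hψbd : ∀ᵐ s ∂(volume.restrict (Ioc (-1:ℝ) 1)),
      ‖(1 - |s|) * ∫ x in Ω, Real.cos ((f x / ε) * s)‖ ≤ ψ s := by
    filter_upwards [ae_restrict_mem measurableSet_Ioc] with s hs
    have hs1 : |s| ≤ 1 := abs_le.2 ⟨hs.1.le, hs.2⟩
    have h2 : abs (1 - |s|) ≤ 1 := by
      rw [abs_of_nonneg (by linarith [abs_nonneg s])]
      linarith [abs_nonneg s]
    rw [Real.norm_eq_abs, abs_mul]
    have hrp0 : (0:ℝ) ≤ c2 * |s| ^ (-δ) := by positivity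
    have hind0 : 0 ≤ V * Set.indicator (Icc (-(2*ε)) (2*ε)) (fun _ => (1:ℝ)) s :=
      mul_nonneg hV0 (Set.indicator_nonneg (fun _ _ => zero_le_one) s)
    by_cases hcase : |s| ≤ 2*ε
    · have hind : Set.indicator (Icc (-(2*ε)) (2*ε)) (fun _ => (1:ℝ)) s = 1 :=
        Set.indicator_of_mem (by rw [Set.mem_Icc]; exact abs_le.1 hcase) _
      calc abs (1 - |s|) * |∫ x in Ω, Real.cos ((f x / ε) * s)|
          ≤ 1 * V := mul_le_mul h2 (htriv' s) (abs_nonneg _) zero_le_one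
        _ = V := one_mul V
        _ ≤ ψ s := by rw [hψ]; simp only; rw [hind]; linarith
    · push_neg at hcase
      calc abs (1 - |s|) * |∫ x in Ω, Real.cos ((f x / ε) * s)|
          ≤ 1 * (c2 * |s| ^ (-δ)) :=
            mul_le_mul h2 (hOsc' s hs hcase.le) (abs_nonneg _) zero_le_one
        _ = c2 * |s| ^ (-δ) := one_mul _
        _ ≤ ψ s := by rw [hψ]; simp only; linarith
  -- the main estimate
  have hmain : ∫ s in Ioc (-1:ℝ) 1, ((1 - |s|) * ∫ x in Ω, Real.cos ((f x / ε) * s))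
      ≤ 4*ε*V + c2 * (2/(1-δ)) := by
    have h1 := norm_integral_le_of_norm_le hψint hψbd
    rw [Real.norm_eq_abs] at h1
    refine (le_abs_self _).trans (h1.trans ?_)
    have hsplit : ∫ s in Ioc (-1:ℝ) 1, ψ s
        = V * (∫ s in Ioc (-1:ℝ) 1, Set.indicator (Icc (-(2*ε)) (2*ε)) (fun _ => (1:ℝ)) s)
          + c2 * ∫ s in Ioc (-1:ℝ) 1, |s| ^ (-δ) := by
      rw [hψ, integral_add hψ1int hψ2int, MeasureTheory.integral_const_mul,
        MeasureTheory.integral_const_mul]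
    rw [hsplit]
    have hI1 : ∫ s in Ioc (-1:ℝ) 1, Set.indicator (Icc (-(2*ε)) (2*ε)) (fun _ => (1:ℝ)) s
        ≤ 4*ε := by
      rw [MeasureTheory.integral_indicator measurableSet_Icc,
        Measure.restrict_restrict measurableSet_Icc, setIntegral_const]
      simp only [smul_eq_mul, mul_one]
      have hle : volume (Icc (-(2*ε)) (2*ε) ∩ Ioc (-1:ℝ) 1) ≤ volume (Icc (-(2*ε)) (2*ε)) :=
        measure_mono inter_subset_left
      have heq4 : (volume (Icc (-(2*ε)) (2*ε))).toReal = 4*ε := by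
        rw [Real.volume_Icc, ENNReal.toReal_ofReal (by linarith)]
        ring
      calc (volume (Icc (-(2*ε)) (2*ε) ∩ Ioc (-1:ℝ) 1)).toReal
          ≤ (volume (Icc (-(2*ε)) (2*ε))).toReal :=
            ENNReal.toReal_mono measure_Icc_lt_top.ne hle
        _ = 4*ε := heq4
    have hI2 : ∫ s in Ioc (-1:ℝ) 1, |s| ^ (-δ) = 2/(1-δ) := by
      rw [← intervalIntegral.integral_of_le (by norm_num : (-1:ℝ) ≤ 1)]
      exact absrpow_int hδ0 hδ1
    rw [hI2]
    have := mul_le_mul_of_nonneg_left hI1 hV0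
    linarith
  -- conclusion
  set P : ℝ := ε ^ δ * |Real.log ε| ^ m with hP
  have hP0 : 0 < P := by positivity
  have hεP : ε ≤ P := by
    have ha : ε ≤ ε ^ δ := by
      have := Real.rpow_le_rpow_of_exponent_ge hεpos hε1.le hδ1.le
      rwa [Real.rpow_one] at this
    have hb2 : 1 ≤ |Real.log ε| ^ m := by
      have := pow_le_pow_left₀ zero_le_one hlog1 m
      rwa [one_pow] at this
    calc ε = ε * 1 := (mul_one ε).symm
      _ ≤ ε ^ δ * |Real.log ε| ^ m := mul_le_mul ha hb2 zero_le_one (le_of_lt hεδ0)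
  calc (volume S).toReal ≤ 2 * ∫ x in Ω, Gker (f x / ε) := stepB
    _ = 2 * ∫ s in Ioc (-1:ℝ) 1, ((1 - |s|) * ∫ x in Ω, Real.cos ((f x / ε) * s)) := by
        rw [hFub]
    _ ≤ 2 * (4*ε*V + c2 * (2/(1-δ))) := by linarith [hmain]
    _ ≤ (8*V + 4*C/(1-δ) + 1) * ε ^ δ * |Real.log ε| ^ m := by
        rw [hc2]
        have h8 : 8 * V * ε ≤ 8 * V * P := mul_le_mul_of_nonneg_left hεP (by positivity)
        have hCd : 0 < 4*C/(1-δ) := by positivity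
        have hrw2 : 2 * (4*ε*V + C * ε ^ δ * |Real.log ε| ^ m * (2/(1-δ)))
            = 8 * V * ε + (4*C/(1-δ)) * P := by
          rw [hP]; field_simp; ring
        rw [hrw2]
        have hgoal : (8*V + 4*C/(1-δ) + 1) * ε ^ δ * |Real.log ε| ^ m
            = (8*V + 4*C/(1-δ) + 1) * P := by rw [hP]; ring
        rw [hgoal]
        nlinarith [hP0, h8]
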